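/- Let B, C > 0, let g₁, g₂ : ℤ → ℝ be arbitrary functions, let N be a positive real number, and let K be a positive integer. Define φ(x,y) = max(1 − B^{−1}‖x‖, 0) · max(1 − C^{−1}‖y‖, 0). Then ∑_{1 ≤ m,n ≤ N} φ(g₁(m) − g₁(n), g₂(m) − g₂(n)) ≤ K · ∑_{1 ≤ m,n ≤ N, |m−n| ≤ 1 + N/K} φ(g₁(m) − g₁(n), g₂(m) − g₂(n)), where in both sums m and n range over positive integers at most N. -/

import Mathlib

open Finset

/-- `‖θ‖`: the distance from `θ` to the nearest integer. -/
noncomputable def distNearestInt (θ : ℝ) : ℝ := |θ - round θ|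

/-- The weight `φ(x,y) = max(1 − B⁻¹‖x‖, 0) · max(1 − C⁻¹‖y‖, 0)`. -/
noncomputable def phiWeight (B C x y : ℝ) : ℝ :=
  max (1 - B⁻¹ * distNearestInt x) 0 * max (1 - C⁻¹ * distNearestInt y) 0

open MeasureTheory intervalIntegral

lemma dni_nonneg (x : ℝ) : 0 ≤ distNearestInt x := abs_nonneg _
lemma dni_le (x : ℝ) (m : ℤ) : distNearestInt x ≤ |x - m| := round_le x m
lemma dni_le_half (x : ℝ) : distNearestInt x ≤ 1/2 := abs_sub_round x
lemma dni_neg (x : ℝ) : distNearestInt (-x) = distNearestInt x := by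
  apply le_antisymm
  · calc distNearestInt (-x) ≤ |(-x) - ((-(round x)) : ℤ)| := dni_le _ _
      _ = distNearestInt x := by rw [distNearestInt]; push_cast; rw [← abs_neg]; ring_nf
  · calc distNearestInt x ≤ |x - ((-(round (-x))) : ℤ)| := dni_le _ _
      _ = distNearestInt (-x) := by rw [distNearestInt]; push_cast; rw [← abs_neg]; ring_nf
lemma dni_add_int (x : ℝ) (m : ℤ) : distNearestInt (x + m) = distNearestInt x := by
  rw [distNearestInt, distNearestInt, round_add_intCast]; push_cast; ring_nf
lemma dni_sub_int (x : ℝ) (m : ℤ) : distNearestInt (x - m) = distNearestInt x := by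
  simpa [sub_eq_add_neg] using dni_add_int x (-m)
lemma dni_eq_abs {x : ℝ} (h : |x| ≤ 1/2) : distNearestInt x = |x| := by
  refine le_antisymm (by simpa using dni_le x 0) ?_
  rw [distNearestInt]
  rcases lt_trichotomy (round x) 0 with hr | hr | hr
  · have : (round x : ℝ) ≤ -1 := by exact_mod_cast (by omega : round x ≤ -1)
    rw [abs_le] at h; rw [abs_of_nonneg (by linarith [neg_abs_le x, abs_le.mp (le_refl |x|)] : (0:ℝ) ≤ x - round x)] <;> cases abs_cases x <;> linarith
  · simp [hr]
  · have : (1 : ℝ) ≤ (round x : ℝ) := by exact_mod_cast hr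
    rw [abs_le] at h
    rw [abs_of_nonpos (by linarith : x - (round x:ℝ) ≤ 0)]
    cases abs_cases x <;> linarith
lemma dni_ge (x : ℝ) : min |x| (1 - |x|) ≤ distNearestInt x := by
  rw [distNearestInt]
  rcases eq_or_ne (round x) 0 with hr | hr
  · simp [hr]
  · have h1 : (1:ℝ) ≤ |(round x : ℝ)| := by
      have := Int.one_le_abs hr; exact_mod_cast this
    have : |(round x : ℝ)| - |x| ≤ |x - round x| := by
      have := abs_sub_abs_le_abs_sub (x - round x) x; simp at this ⊢; linarith [abs_sub_comm x (round x : ℝ), abs_sub_abs_le_abs_sub ((round x:ℝ)) x]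
    exact le_trans (min_le_right _ _) (by linarith)

noncomputable def Ff (B z : ℝ) : ℝ := max (1 - B⁻¹ * distNearestInt z) 0
noncomputable def hh (B x t : ℝ) : ℝ := if distNearestInt (t - x) < B/2 then 1 else 0

lemma dni_measurable : Measurable distNearestInt := by
  have : distNearestInt = fun x => min (Int.fract x) (1 - Int.fract x) := by
    funext x; exact abs_sub_round_eq_min x
  rw [this]
  exact measurable_fract.min (measurable_const.sub measurable_fract)

lemma hh_measurable (B x : ℝ) : Measurable (hh B x) := by
  unfold hh
  exact Measurable.ite (measurableSet_lt (dni_measurable.comp (measurable_id.sub_const x)) measurable_const) measurable_const measurable_const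

lemma hh_intervalIntegrable (B x y : ℝ) (a b : ℝ) :
    IntervalIntegrable (fun t => hh B x t * hh B y t) volume a b := by
  apply IntervalIntegrable.mono_fun' (g := fun _ => (1:ℝ)) intervalIntegrable_const
  · exact ((hh_measurable B x).mul (hh_measurable B y)).aestronglyMeasurable
  · filter_upwards with t
    unfold hh
    split <;> split <;> norm_num

-- integral of indicator of Ioo over c..d
lemma integral_ite_Ioo (a b c d : ℝ) (hcd : c ≤ d) (hsub : Set.Ioo a b ⊆ Set.Ioc c d) :
    ∫ s in c..d, (if a < s ∧ s < b then (1:ℝ) else 0) = max (b - a) 0 := by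
  have h1 : (fun s => if a < s ∧ s < b then (1:ℝ) else 0) = Set.indicator (Set.Ioo a b) (fun _ => (1:ℝ)) := by
    ext s; simp [Set.indicator_apply, Set.mem_Ioo]
  rw [h1, integral_of_le hcd, MeasureTheory.setIntegral_indicator measurableSet_Ioo,
    Set.inter_eq_right.mpr hsub]
  simp [Real.volume_Ioo]

lemma Ff_nonneg (B z : ℝ) : 0 ≤ Ff B z := le_max_right _ _

lemma mul_Ff {B : ℝ} (hB : 0 < B) (z : ℝ) : B * Ff B z = max (B - distNearestInt z) 0 := by
  rw [Ff, mul_max_of_nonneg _ _ hB.le, mul_zero]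
  congr 1
  field_simp

lemma overlap {B : ℝ} (hB : 0 < B) (hB2 : B ≤ 1/2) (x y : ℝ) :
    ∫ t in (0:ℝ)..1, hh B x t * hh B y t = B * Ff B (x - y) := by
  set δ : ℝ := (y - x) - round (y - x) with hδdef
  have hδ : |δ| ≤ 1/2 := abs_sub_round (y - x)
  have hδd : distNearestInt (x - y) = |δ| := by
    rw [← dni_neg (x - y)]; norm_num [distNearestInt]; rfl
  have per : Function.Periodic (fun t => hh B x t * hh B y t) 1 := by
    intro t
    have h1 : ∀ z : ℝ, hh B z (t + 1) = hh B z t := by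
      intro z
      have : t + 1 - z = (t - z) + ((1:ℤ):ℝ) := by push_cast; ring
      simp only [hh, this, dni_add_int]
    simp [h1]
  have e1 : ∫ t in (0:ℝ)..1, hh B x t * hh B y t
      = ∫ t in (x - 1/2)..(x - 1/2 + 1), hh B x t * hh B y t := by
    have := per.intervalIntegral_add_eq (x - 1/2) 0
    norm_num at this ⊢
    rw [← this]
  have e2 : ∫ t in (x - 1/2)..(x - 1/2 + 1), hh B x t * hh B y t
      = ∫ s in (-(1/2) : ℝ)..(1/2), hh B x (s + x) * hh B y (s + x) := by
    rw [intervalIntegral.integral_comp_add_right (fun t => hh B x t * hh B y t) x]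
    norm_num
    congr 1 <;> ring
  set a' : ℝ := max (-(B/2)) (δ - B/2) with ha'
  set b' : ℝ := min (B/2) (δ + B/2) with hb'
  have e3 : ∫ s in (-(1/2) : ℝ)..(1/2), hh B x (s + x) * hh B y (s + x)
      = ∫ s in (-(1/2) : ℝ)..(1/2), (if a' < s ∧ s < b' then (1:ℝ) else 0) := by
    apply intervalIntegral.integral_congr
    intro s hs
    rw [Set.uIcc_of_le (by norm_num)] at hs
    have hs2 : |s| ≤ 1/2 := abs_le.mpr ⟨hs.1, hs.2⟩
    have hfst : hh B x (s + x) = if |s| < B/2 then (1:ℝ) else 0 := by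
      simp only [hh, add_sub_cancel_right, dni_eq_abs hs2]
    have hdni : distNearestInt (s + x - y) = distNearestInt (s - δ) := by
      have : s - δ = (s + x - y) + round (y - x) := by rw [hδdef]; ring
      rw [this, dni_add_int]
    show hh B x (s + x) * hh B y (s + x) = if a' < s ∧ s < b' then (1:ℝ) else 0
    by_cases hP : |s| < B/2
    · have habs : |s - δ| ≤ B/2 + 1/2 := by
        calc |s - δ| ≤ |s| + |δ| := abs_sub _ _
          _ ≤ B/2 + 1/2 := by linarith
      have hsnd : hh B y (s + x) = if |s - δ| < B/2 then (1:ℝ) else 0 := by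
        simp only [hh, hdni]
        rcases le_or_gt |s - δ| (1/2) with h | h
        · rw [dni_eq_abs h]
        · have h1 : ¬ (|s - δ| < B/2) := by push_neg; linarith
          have h2 : ¬ (distNearestInt (s - δ) < B/2) := by
            push_neg
            calc B/2 ≤ min |s - δ| (1 - |s - δ|) := le_min (by linarith) (by linarith)
              _ ≤ distNearestInt (s - δ) := dni_ge _
          simp [h1, h2]
      rw [hfst, hsnd, if_pos hP]
      have : (a' < s ∧ s < b') ↔ (|s| < B/2 ∧ |s - δ| < B/2) := by
        rw [ha', hb', max_lt_iff, lt_min_iff, abs_lt, abs_lt]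
        constructor <;> rintro ⟨⟨h1, h2⟩, h3, h4⟩ <;> exact ⟨⟨by linarith, by linarith⟩, by linarith, by linarith⟩
      rw [if_congr this rfl rfl]
      by_cases hQ : |s - δ| < B/2 <;> simp [hP, hQ]
    · rw [hfst, if_neg hP]
      have : ¬ (a' < s ∧ s < b') := by
        rw [ha', hb', max_lt_iff, lt_min_iff]
        rintro ⟨⟨h1, _⟩, h3, _⟩
        exact hP (abs_lt.mpr ⟨by linarith, by linarith⟩)
      rw [if_neg this, zero_mul]
  rw [e1, e2, e3, integral_ite_Ioo a' b' _ _ (by norm_num)]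
  · rw [mul_Ff hB, hδd]
    have : b' - a' = B - |δ| := by
      rcases le_or_gt 0 δ with h | h
      · rw [hb', ha', min_eq_left (by linarith), max_eq_right (by linarith), abs_of_nonneg h]; ring
      · rw [hb', ha', min_eq_right (by linarith), max_eq_left (by linarith), abs_of_neg h]; ring
    rw [this]
  · intro s hs
    rw [Set.mem_Ioo] at hs
    have h1 : -(B/2) < s := lt_of_le_of_lt (le_max_left _ _) hs.1
    have h2 : s < B/2 := lt_of_lt_of_le hs.2 (min_le_left _ _)
    exact Set.mem_Ioc.mpr ⟨by linarith, by linarith⟩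

lemma psd_one {ι : Type*} (s : Finset ι) (v : ι → ℝ) :
    0 ≤ ∑ i ∈ s, ∑ j ∈ s, v i * v j * (1:ℝ) := by
  have : ∑ i ∈ s, ∑ j ∈ s, v i * v j * (1:ℝ) = (∑ i ∈ s, v i) * (∑ j ∈ s, v j) := by
    rw [Finset.sum_mul_sum]
    simp [mul_one]
  rw [this]
  exact mul_self_nonneg _

set_option maxHeartbeats 1000000 in
lemma psd_mixed {ι : Type*} (s : Finset ι) (k : ι → ι → ℝ)
    (hk : ∀ v : ι → ℝ, 0 ≤ ∑ i ∈ s, ∑ j ∈ s, v i * v j * k i j)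
    {B : ℝ} (hB : 0 < B) (hB2 : B ≤ 1/2) (y : ι → ℝ) (w : ι → ℝ) :
    0 ≤ ∑ i ∈ s, ∑ j ∈ s, w i * w j * (k i j * Ff B (y i - y j)) := by
  have hint : ∀ (i j : ι), IntervalIntegrable
      (fun t => (w i * hh B (y i) t) * (w j * hh B (y j) t) * k i j) volume 0 1 := by
    intro i j
    have heq : (fun t => (w i * hh B (y i) t) * (w j * hh B (y j) t) * k i j)
        = fun t => (w i * w j * k i j) * (hh B (y i) t * hh B (y j) t) := by
      funext t; ring
    rw [heq]
    exact (hh_intervalIntegrable B (y i) (y j) 0 1).const_mul _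
  have hints : ∀ i ∈ s, IntervalIntegrable
      (fun t => ∑ j ∈ s, (w i * hh B (y i) t) * (w j * hh B (y j) t) * k i j) volume 0 1 := by
    intro i _
    have h2 := IntervalIntegrable.sum s (fun j (_ : j ∈ s) => hint i j)
    have h3 : (fun t => ∑ j ∈ s, (w i * hh B (y i) t) * (w j * hh B (y j) t) * k i j)
        = ∑ j ∈ s, fun t => (w i * hh B (y i) t) * (w j * hh B (y j) t) * k i j := by
      funext t
      rw [Finset.sum_apply]
    rw [h3]
    exact h2
  have key : (∫ t in (0:ℝ)..1, ∑ i ∈ s, ∑ j ∈ s,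
        (w i * hh B (y i) t) * (w j * hh B (y j) t) * k i j)
      = B * ∑ i ∈ s, ∑ j ∈ s, w i * w j * (k i j * Ff B (y i - y j)) := by
    rw [intervalIntegral.integral_finset_sum (f := fun i t => ∑ j ∈ s, (w i * hh B (y i) t) * (w j * hh B (y j) t) * k i j) hints]
    rw [Finset.mul_sum]
    refine Finset.sum_congr rfl (fun i _ => ?_)
    rw [intervalIntegral.integral_finset_sum (f := fun j t => (w i * hh B (y i) t) * (w j * hh B (y j) t) * k i j) (fun j _ => hint i j), Finset.mul_sum]
    refine Finset.sum_congr rfl (fun j _ => ?_)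
    have heq : (fun t => (w i * hh B (y i) t) * (w j * hh B (y j) t) * k i j)
        = fun t => (w i * w j * k i j) * (hh B (y i) t * hh B (y j) t) := by
      funext t; ring
    rw [heq, intervalIntegral.integral_const_mul, overlap hB hB2 (y i) (y j)]
    ring
  have h0 : 0 ≤ ∫ t in (0:ℝ)..1, ∑ i ∈ s, ∑ j ∈ s,
      (w i * hh B (y i) t) * (w j * hh B (y j) t) * k i j := by
    apply intervalIntegral.integral_nonneg (by norm_num)
    intro t _
    exact hk (fun i => w i * hh B (y i) t)
  rw [key] at h0
  exact nonneg_of_mul_nonneg_right h0 hB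

lemma Ff_decomp {B : ℝ} (hB : 0 < B) : ∃ a b B', 0 ≤ a ∧ 0 ≤ b ∧ 0 < B' ∧ B' ≤ 1/2 ∧
    ∀ z, Ff B z = a + b * Ff B' z := by
  rcases le_or_gt B (1/2) with h | h
  · exact ⟨0, 1, B, le_refl 0, zero_le_one, hB, h, fun z => by ring⟩
  · refine ⟨1 - (2*B)⁻¹, (2*B)⁻¹, 1/2, ?_, by positivity, by norm_num, le_refl _, ?_⟩
    · have h1 : (2*B)⁻¹ ≤ 1 := by
        rw [inv_le_one_iff₀]; right; linarith
      linarith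
    · intro z
      have hd := dni_le_half z
      have hd0 := dni_nonneg z
      have hBi : B⁻¹ < 2 := by
        rw [inv_lt_iff_one_lt_mul₀ hB]; linarith
      rw [Ff, Ff, max_eq_left, max_eq_left]
      · have : ((1:ℝ)/2)⁻¹ = 2 := by norm_num
        rw [this]
        field_simp
        ring
      · have : ((1:ℝ)/2)⁻¹ = 2 := by norm_num
        rw [this]; linarith
      · nlinarith [mul_le_mul_of_nonneg_left hd (le_of_lt (inv_pos.mpr hB)), inv_pos.mpr hB]

lemma psd_phi {B C : ℝ} (hB : 0 < B) (hC : 0 < C) {ι : Type*} (s : Finset ι)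
    (x y w : ι → ℝ) :
    0 ≤ ∑ i ∈ s, ∑ j ∈ s, w i * w j * (Ff B (x i - x j) * Ff C (y i - y j)) := by
  obtain ⟨a₁, b₁, B', ha₁, hb₁, hB', hB'2, hFB⟩ := Ff_decomp hB
  obtain ⟨a₂, b₂, C', ha₂, hb₂, hC', hC'2, hFC⟩ := Ff_decomp hC
  have hkB : ∀ v : ι → ℝ, 0 ≤ ∑ i ∈ s, ∑ j ∈ s, v i * v j * Ff B' (x i - x j) := by
    intro v
    have := psd_mixed s (fun _ _ => (1:ℝ)) (fun v' => psd_one s v') hB' hB'2 x v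
    simpa using this
  have expand : ∀ i j, w i * w j * (Ff B (x i - x j) * Ff C (y i - y j))
      = a₁*a₂*(w i * w j * (1:ℝ)) + a₂*b₁*(w i * w j * ((1:ℝ) * Ff B' (x i - x j)))
        + a₁*b₂*(w i * w j * ((1:ℝ) * Ff C' (y i - y j)))
        + b₁*b₂*(w i * w j * (Ff B' (x i - x j) * Ff C' (y i - y j))) := by
    intro i j; rw [hFB, hFC]; ring
  have final : ∑ i ∈ s, ∑ j ∈ s, w i * w j * (Ff B (x i - x j) * Ff C (y i - y j))
      = a₁*a₂* (∑ i ∈ s, ∑ j ∈ s, w i * w j * (1:ℝ))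
        + a₂*b₁* (∑ i ∈ s, ∑ j ∈ s, w i * w j * ((1:ℝ) * Ff B' (x i - x j)))
        + a₁*b₂* (∑ i ∈ s, ∑ j ∈ s, w i * w j * ((1:ℝ) * Ff C' (y i - y j)))
        + b₁*b₂* (∑ i ∈ s, ∑ j ∈ s, w i * w j * (Ff B' (x i - x j) * Ff C' (y i - y j))) := by
    simp only [Finset.mul_sum, ← Finset.sum_add_distrib]
    exact Finset.sum_congr rfl fun i _ => Finset.sum_congr rfl fun j _ => expand i j
  rw [final]
  have t1 := psd_one s w
  have t2 := psd_mixed s (fun _ _ => (1:ℝ)) (fun v' => psd_one s v') hB' hB'2 x w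
  have t3 := psd_mixed s (fun _ _ => (1:ℝ)) (fun v' => psd_one s v') hC' hC'2 y w
  have t4 := psd_mixed s (fun i j => Ff B' (x i - x j)) hkB hC' hC'2 y w
  have := mul_nonneg (mul_nonneg ha₁ ha₂) t1
  have := mul_nonneg (mul_nonneg ha₂ hb₁) t2
  have := mul_nonneg (mul_nonneg ha₁ hb₂) t3
  have := mul_nonneg (mul_nonneg hb₁ hb₂) t4
  linarith

lemma phiWeight_eq (B C x y : ℝ) : phiWeight B C x y = Ff B x * Ff C y := rfl

/-- The localization step: for `B, C > 0`, arbitrary `g₁, g₂ : ℤ → ℝ`, a positive real `N`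
and a positive integer `K`,
`∑_{1≤m,n≤N} φ(g₁(m)−g₁(n), g₂(m)−g₂(n))
  ≤ K ∑_{1≤m,n≤N, |m−n|≤1+N/K} φ(g₁(m)−g₁(n), g₂(m)−g₂(n))`. -/
theorem localization (B C : ℝ) (hB : 0 < B) (hC : 0 < C) (g₁ g₂ : ℤ → ℝ)
    (N : ℝ) (hN : 0 < N) (K : ℕ) (hK : 0 < K) :
    ∑ m ∈ Finset.Icc 1 ⌊N⌋₊, ∑ n ∈ Finset.Icc 1 ⌊N⌋₊,
        phiWeight B C (g₁ m - g₁ n) (g₂ m - g₂ n) ≤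
      (K : ℝ) * ∑ m ∈ Finset.Icc 1 ⌊N⌋₊,
        ∑ n ∈ (Finset.Icc 1 ⌊N⌋₊).filter (fun n : ℕ => |(m : ℝ) - (n : ℝ)| ≤ 1 + N / (K : ℝ)),
          phiWeight B C (g₁ m - g₁ n) (g₂ m - g₂ n) := by
  simp only [phiWeight_eq]
  set M := ⌊N⌋₊ with hM
  rcases Nat.eq_zero_or_pos M with h0 | hMpos
  · rw [h0, Finset.Icc_eq_empty (by omega)]
    simp
  set s : Finset ℕ := Finset.Icc 1 M with hs
  set f : ℕ → ℕ → ℝ := fun m n => Ff B (g₁ m - g₁ n) * Ff C (g₂ m - g₂ n) with hf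
  have hf_nonneg : ∀ m n, 0 ≤ f m n := fun m n => mul_nonneg (Ff_nonneg _ _) (Ff_nonneg _ _)
  have hf_symm : ∀ m n, f m n = f n m := by
    intro m n
    simp only [hf, Ff]
    rw [show g₁ m - g₁ n = -(g₁ n - g₁ m) by ring, show (g₂ m - g₂ n : ℝ) = -(g₂ n - g₂ m) by ring,
      dni_neg, dni_neg]
  have hMN : (M:ℝ) ≤ N := Nat.floor_le hN.le
  set b : ℕ → ℕ := fun n => ((n - 1) * K) / M with hb
  have hbK : ∀ n ∈ s, b n < K := by
    intro n hn
    rw [hs, Finset.mem_Icc] at hn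
    rw [hb, Nat.div_lt_iff_lt_mul hMpos]
    calc (n-1) * K < M * K := (Nat.mul_lt_mul_right hK).mpr (by omega)
      _ = K * M := mul_comm _ _
  -- pairs in the same block are near
  have hnear : ∀ m ∈ s, ∀ n ∈ s, b m = b n → |(m:ℝ) - n| ≤ 1 + N / K := by
    have key : ∀ p q : ℕ, p ∈ s → q ∈ s → b p = b q → q ≤ p → ((p:ℝ) - q) ≤ N / K := by
      intro p q hp hq hbpq hqp
      rw [hs, Finset.mem_Icc] at hp hq
      have h1 : (p - 1) * K ≤ M * (((p-1)*K) / M) + (M - 1) := by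
        have := Nat.div_add_mod ((p-1)*K) M
        have := Nat.mod_lt ((p-1)*K) hMpos
        omega
      have h2 : M * (((q-1)*K) / M) ≤ (q - 1) * K := Nat.mul_div_le ((q-1)*K) M
      have hbb : ((p-1)*K) / M = ((q-1)*K) / M := hbpq
      rw [hbb] at h1
      have h3 : (p - q) * K + (q-1)*K = (p-1)*K := by
        rw [← Nat.add_mul]; congr 1; omega
      have h4 : (p - q) * K ≤ M - 1 := by omega
      have h5 : ((p:ℝ) - q) * K ≤ (M:ℝ) - 1 := by
        have h6 := (Nat.cast_le (α := ℝ)).mpr h4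
        push_cast [Nat.cast_sub hqp, Nat.cast_sub (show 1 ≤ M by omega)] at h6
        exact h6
      have hK' : (0:ℝ) < K := by exact_mod_cast hK
      rw [le_div_iff₀ hK']
      nlinarith
    intro m hm n hn hbmn
    rcases le_total n m with h | h
    · have := key m n hm hn hbmn h
      have hnn : (0:ℝ) ≤ (m:ℝ) - n := by
        have : (n:ℝ) ≤ m := by exact_mod_cast h
        linarith
      rw [abs_of_nonneg hnn]
      have hNK : 0 ≤ N / K := by positivity
      linarith
    · have := key n m hn hm hbmn.symm h
      have hnn : (m:ℝ) - n ≤ 0 := by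
        have : (m:ℝ) ≤ n := by exact_mod_cast h
        linarith
      rw [abs_of_nonpos hnn]
      linarith
  set χ : ℕ → ℕ → ℝ := fun j n => if b n = j then 1 else 0 with hχ
  set T : ℕ → ℕ → ℝ := fun j k => ∑ m ∈ s, ∑ n ∈ s, χ j m * χ k n * f m n with hT
  set R : Finset ℕ := Finset.range K with hR
  -- Step A
  have stepA : ∑ m ∈ s, ∑ n ∈ s, f m n = ∑ j ∈ R, ∑ k ∈ R, T j k := by
    have hsum1 : ∀ m ∈ s, ∑ j ∈ R, χ j m = 1 := by
      intro m hm
      rw [hχ, hR]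
      simp only
      rw [Finset.sum_ite_eq (Finset.range K) (b m) (fun _ => (1:ℝ))]
      rw [if_pos (Finset.mem_range.mpr (hbK m hm))]
    have hper : ∀ m ∈ s, ∀ n ∈ s, f m n = ∑ j ∈ R, ∑ k ∈ R, χ j m * χ k n * f m n := by
      intro m hm n hn
      have : ∑ j ∈ R, ∑ k ∈ R, χ j m * χ k n * f m n
          = (∑ j ∈ R, χ j m) * (∑ k ∈ R, χ k n) * f m n := by
        rw [Finset.sum_mul_sum, Finset.sum_mul]
        refine Finset.sum_congr rfl fun j _ => ?_
        rw [Finset.sum_mul]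
      rw [this, hsum1 m hm, hsum1 n hn, one_mul, one_mul]
    calc ∑ m ∈ s, ∑ n ∈ s, f m n
        = ∑ m ∈ s, ∑ n ∈ s, ∑ j ∈ R, ∑ k ∈ R, χ j m * χ k n * f m n :=
          Finset.sum_congr rfl fun m hm => Finset.sum_congr rfl fun n hn => hper m hm n hn
      _ = ∑ m ∈ s, ∑ j ∈ R, ∑ n ∈ s, ∑ k ∈ R, χ j m * χ k n * f m n :=
          Finset.sum_congr rfl fun m _ => Finset.sum_comm
      _ = ∑ j ∈ R, ∑ m ∈ s, ∑ n ∈ s, ∑ k ∈ R, χ j m * χ k n * f m n := Finset.sum_comm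
      _ = ∑ j ∈ R, ∑ m ∈ s, ∑ k ∈ R, ∑ n ∈ s, χ j m * χ k n * f m n :=
          Finset.sum_congr rfl fun j _ => Finset.sum_congr rfl fun m _ => Finset.sum_comm
      _ = ∑ j ∈ R, ∑ k ∈ R, ∑ m ∈ s, ∑ n ∈ s, χ j m * χ k n * f m n :=
          Finset.sum_congr rfl fun j _ => Finset.sum_comm
  -- Step B
  have stepB : ∀ j k, T j k + T k j ≤ T j j + T k k := by
    intro j k
    have hpsd := psd_phi hB hC s (fun m : ℕ => g₁ m) (fun m : ℕ => g₂ m) (fun m => χ j m - χ k m)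
    have hexp : ∑ m ∈ s, ∑ n ∈ s, (χ j m - χ k m) * (χ j n - χ k n) *
          (Ff B (g₁ m - g₁ n) * Ff C (g₂ m - g₂ n))
        = T j j - T j k - (T k j - T k k) := by
      have hpoint : ∀ m n : ℕ, (χ j m - χ k m) * (χ j n - χ k n) *
            (Ff B (g₁ m - g₁ n) * Ff C (g₂ m - g₂ n))
          = χ j m * χ j n * f m n - χ j m * χ k n * f m n
            - (χ k m * χ j n * f m n - χ k m * χ k n * f m n) := by
        intro m n
        simp only [hf]
        ring
      calc ∑ m ∈ s, ∑ n ∈ s, (χ j m - χ k m) * (χ j n - χ k n) *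
            (Ff B (g₁ m - g₁ n) * Ff C (g₂ m - g₂ n))
          = ∑ m ∈ s, ∑ n ∈ s, (χ j m * χ j n * f m n - χ j m * χ k n * f m n
              - (χ k m * χ j n * f m n - χ k m * χ k n * f m n)) :=
            Finset.sum_congr rfl fun m _ => Finset.sum_congr rfl fun n _ => hpoint m n
        _ = T j j - T j k - (T k j - T k k) := by
            rw [hT]
            simp only [Finset.sum_sub_distrib]
    rw [hexp] at hpsd
    linarith
  -- Step C
  have cardR : (R.card : ℝ) = K := by rw [hR, Finset.card_range]
  have stepC : ∑ j ∈ R, ∑ k ∈ R, T j k ≤ (K:ℝ) * ∑ j ∈ R, T j j := by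
    have hsym : ∑ j ∈ R, ∑ k ∈ R, T j k = ∑ j ∈ R, ∑ k ∈ R, T k j := Finset.sum_comm
    have hle : ∑ j ∈ R, ∑ k ∈ R, (T j k + T k j) ≤ ∑ j ∈ R, ∑ k ∈ R, (T j j + T k k) :=
      Finset.sum_le_sum fun j _ => Finset.sum_le_sum fun k _ => stepB j k
    have e1 : ∑ j ∈ R, ∑ k ∈ R, (T j k + T k j)
        = ∑ j ∈ R, ∑ k ∈ R, T j k + ∑ j ∈ R, ∑ k ∈ R, T k j := by
      simp [Finset.sum_add_distrib]
    have e2 : ∑ j ∈ R, ∑ k ∈ R, (T j j + T k k)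
        = (K:ℝ) * ∑ j ∈ R, T j j + (K:ℝ) * ∑ k ∈ R, T k k := by
      simp only [Finset.sum_add_distrib]
      congr 1
      · rw [Finset.mul_sum]
        refine Finset.sum_congr rfl fun j _ => ?_
        rw [Finset.sum_const, nsmul_eq_mul, ← cardR]
      · rw [Finset.sum_comm, Finset.mul_sum]
        refine Finset.sum_congr rfl fun k _ => ?_
        rw [Finset.sum_const, nsmul_eq_mul, ← cardR]
    rw [e1, ← hsym] at hle
    rw [e2] at hle
    linarith
  -- Step D
  have stepD : ∑ j ∈ R, T j j ≤ ∑ m ∈ s, ∑ n ∈ s.filter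
      (fun n : ℕ => |(m : ℝ) - (n : ℝ)| ≤ 1 + N / (K : ℝ)), f m n := by
    have hdiag : ∑ j ∈ R, T j j
        = ∑ m ∈ s, ∑ n ∈ s, (if b m = b n then (1:ℝ) else 0) * f m n := by
      rw [hT]
      simp only
      rw [Finset.sum_comm]
      refine Finset.sum_congr rfl fun m hm => ?_
      rw [Finset.sum_comm]
      refine Finset.sum_congr rfl fun n hn => ?_
      by_cases h : b m = b n
      · have : ∀ j, χ j m * χ j n * f m n = if b m = j then f m n else 0 := by
          intro j
          rw [hχ]
          simp only
          by_cases hj : b m = j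
          · rw [if_pos hj, if_pos hj, if_pos (h ▸ hj), one_mul, one_mul]
          · rw [if_neg hj, if_neg hj, zero_mul, zero_mul]
        simp only [this]
        rw [Finset.sum_ite_eq R (b m) (fun _ => f m n), if_pos (Finset.mem_range.mpr (hbK m hm)),
          if_pos h, one_mul]
      · have : ∀ j, χ j m * χ j n * f m n = 0 := by
          intro j
          rw [hχ]
          simp only
          by_cases hj : b m = j
          · rw [show (if b n = j then (1:ℝ) else 0) = 0 from
              if_neg (fun hh => h (hj.trans hh.symm)), mul_zero, zero_mul]
          · rw [if_neg hj, zero_mul, zero_mul]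
        simp only [this]
        rw [Finset.sum_const, smul_zero, if_neg h, zero_mul]
    rw [hdiag]
    refine Finset.sum_le_sum fun m hm => ?_
    have e3 : ∑ n ∈ s, (if b m = b n then (1:ℝ) else 0) * f m n
        = ∑ n ∈ s.filter (fun n => b m = b n), f m n := by
      rw [Finset.sum_filter]
      refine Finset.sum_congr rfl fun n _ => ?_
      by_cases h : b m = b n <;> simp [h]
    rw [e3]
    refine Finset.sum_le_sum_of_subset_of_nonneg ?_ (fun n hn _ => hf_nonneg m n)
    intro n hn
    rw [Finset.mem_filter] at hn ⊢
    exact ⟨hn.1, hnear m hm n hn.1 hn.2⟩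
  calc ∑ m ∈ s, ∑ n ∈ s, f m n = ∑ j ∈ R, ∑ k ∈ R, T j k := stepA
    _ ≤ (K:ℝ) * ∑ j ∈ R, T j j := stepC
    _ ≤ (K:ℝ) * ∑ m ∈ s, ∑ n ∈ s.filter
          (fun n : ℕ => |(m : ℝ) - (n : ℝ)| ≤ 1 + N / (K : ℝ)), f m n := by
        apply mul_le_mul_of_nonneg_left stepD (by positivity)
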